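/- Fix s ∈ (0, 1) and define u : [0, ∞) → ℝ by u(y) = 6s/(y·√s + √6)². Then u is twice continuously differentiable, satisfies the differential equation u''(y) = u(y)² for all y > 0, has boundary value u(0) = s, and satisfies lim_{y→∞} u(y) = 0. -/

import Mathlib

open Set Filter

/-- The explicit formula `u(y) = 6s/(y√s + √6)²` solves the boundary value problem
`u'' = u²`, `u(0) = s`, `u(∞) = 0`, and is twice continuously differentiable on `[0, ∞)`. -/
theorem pgf_complement_formula
    (s : ℝ) (hs : s ∈ Ioo (0:ℝ) 1)
    (u : ℝ → ℝ)
    (hu : ∀ y : ℝ, u y = 6 * s / (y * Real.sqrt s + Real.sqrt 6) ^ 2) :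
    ContDiffOn ℝ 2 u (Ici 0) ∧
    (∀ y : ℝ, 0 < y → deriv (deriv u) y = (u y) ^ 2) ∧
    u 0 = s ∧
    Tendsto u atTop (nhds 0) := by
  obtain ⟨hs0, hs1⟩ := hs
  have hss : (0:ℝ) < Real.sqrt s := Real.sqrt_pos.2 hs0
  have h6 : (0:ℝ) < Real.sqrt 6 := Real.sqrt_pos.2 (by norm_num)
  set a := Real.sqrt s with ha
  set b := Real.sqrt 6 with hb
  have hu' : u = fun y => 6 * s / (y * a + b) ^ 2 := funext hu
  have hgpos : ∀ y : ℝ, 0 ≤ y → 0 < y * a + b := fun y hy => by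
    nlinarith [mul_nonneg hy hss.le]
  have hgcont : Continuous (fun z : ℝ => z * a + b) :=
    (continuous_id.mul continuous_const).add continuous_const
  -- derivative of u where denominator nonzero
  have hD : ∀ y : ℝ, y * a + b ≠ 0 →
      HasDerivAt u (-(12 * s * a) / (y * a + b) ^ 3) y := by
    intro y hy
    have hg : HasDerivAt (fun z : ℝ => z * a + b) a y := by
      simpa using ((hasDerivAt_id y).mul_const a).add_const b
    have h2 : HasDerivAt (fun z : ℝ => (z * a + b) ^ 2) (2 * (y * a + b) * a) y := by
      simpa [mul_comm, mul_assoc, mul_left_comm] using hg.fun_pow 2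
    have h3 := (hasDerivAt_const y (6 * s)).fun_div h2 (pow_ne_zero 2 hy)
    rw [hu']
    refine h3.congr_deriv ?_
    field_simp
    ring
  refine ⟨?_, ?_, ?_, ?_⟩
  · rw [hu']
    exact ContDiffOn.div contDiffOn_const
      ((((contDiff_id.mul contDiff_const).add contDiff_const).pow 2).contDiffOn)
      (fun y hy => pow_ne_zero 2 (hgpos y hy).ne')
  · intro y hy
    have hypos : 0 < y * a + b := hgpos y hy.le
    have hev : ∀ᶠ z in nhds y, 0 < z * a + b :=
      (isOpen_lt continuous_const hgcont).mem_nhds hypos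
    have heq : deriv u =ᶠ[nhds y] fun z => -(12 * s * a) / (z * a + b) ^ 3 :=
      hev.mono fun z hz => (hD z hz.ne').deriv
    rw [heq.deriv_eq]
    have hg : HasDerivAt (fun z : ℝ => z * a + b) a y := by
      simpa using ((hasDerivAt_id y).mul_const a).add_const b
    have h3 : HasDerivAt (fun z : ℝ => (z * a + b) ^ 3) (3 * (y * a + b) ^ 2 * a) y := by
      simpa [mul_comm, mul_assoc, mul_left_comm] using hg.fun_pow 3
    have h4 := (hasDerivAt_const y (-(12 * s * a))).fun_div h3 (pow_ne_zero 3 hypos.ne')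
    rw [h4.deriv, hu]
    have ha2 : a ^ 2 = s := Real.sq_sqrt hs0.le
    field_simp
    rw [← ha2]
    ring
  · rw [hu 0]
    have : b ^ 2 = 6 := Real.sq_sqrt (by norm_num)
    rw [zero_mul, zero_add, this]
    field_simp
  · rw [hu']
    have h1 : Tendsto (fun y : ℝ => y * a + b) atTop atTop :=
      tendsto_atTop_add_const_right _ b (tendsto_id.atTop_mul_const hss)
    have h2 : Tendsto (fun y : ℝ => (y * a + b) ^ 2) atTop atTop :=
      (tendsto_pow_atTop (two_ne_zero)).comp h1
    have h3 : Tendsto (fun y : ℝ => ((y * a + b) ^ 2)⁻¹) atTop (nhds 0) :=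
      tendsto_inv_atTop_zero.comp h2
    have := h3.const_mul (6 * s)
    simpa [div_eq_mul_inv] using this
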